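/- Let θ be a unital partial action of a group G on a κ-algebra A and ς a κ-based partial 2-cocycle with corresponding κ-valued twist σ. Then the map Γ_σ : G → A ∗_{θ,ς} G given by g ↦ 1_g δ_g is a partial projective representation of G with factor set σ. -/
import Mathlib


/-- A unital partial action `θ` of a group `G` on a unital `κ`-algebra `A`.
The ideal `D_g` is the ideal generated by the central idempotent `e g`, and
`θ g : D_{g⁻¹} → D_g` is encoded as a `κ`-linear map `A → A` which only depends on
the component `e g⁻¹ * a` and whose image lies in `D_g`. -/
structure IsUnitalPartialAction (κ : Type) {G A : Type} [Field κ] [Group G]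
    [Ring A] [Algebra κ A] (e : G → A) (θ : G → A → A) : Prop where
  central : ∀ (g : G) (a : A), e g * a = a * e g
  idem : ∀ g : G, e g * e g = e g
  unit_one : e 1 = 1
  lin : ∀ g : G, IsLinearMap κ (θ g)
  dom : ∀ (g : G) (a : A), θ g a = θ g (e g⁻¹ * a)
  range : ∀ (g : G) (a : A), e g * θ g a = θ g a
  mul : ∀ (g : G) (a b : A),
    θ g (e g⁻¹ * (a * b)) = θ g (e g⁻¹ * a) * θ g (e g⁻¹ * b)
  map_one' : ∀ a : A, θ 1 a = a
  unit_map : ∀ g h : G, θ g (e g⁻¹ * e h) = e g * e (g * h)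
  comp : ∀ (g h : G) (a : A),
    θ g (θ h (e h⁻¹ * (e (g * h)⁻¹ * a))) = θ (g * h) (e h⁻¹ * (e (g * h)⁻¹ * a))
  inv : ∀ (g : G) (a : A), θ g⁻¹ (θ g (e g⁻¹ * a)) = e g⁻¹ * a

/-- `σ : G × G → κ` is the `κ`-valued twist of the unital partial action with
idempotents `e`, corresponding to the `κ`-based partial 2-cocycle
`ς(g,h) = σ(g,h) • (e g * e (g*h))`. -/
structure IsKValuedTwist (κ : Type) {G A : Type} [Field κ] [Group G]
    [Ring A] [Algebra κ A] (e : G → A) (σ : G → G → κ) : Prop where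
  zero_iff : ∀ g h : G, σ g h = 0 ↔ e g * e (g * h) = 0
  cocycle : ∀ g h t : G, e g * e (g * h) * e (g * h * t) ≠ 0 →
    σ g h * σ (g * h) t = σ g (h * t) * σ h t
  one_left : ∀ g : G, e g ≠ 0 → σ 1 g = 1
  one_right : ∀ g : G, e g ≠ 0 → σ g 1 = 1

/-- `(Λ, δ)` is a realization of the crossed product `A ∗_{θ,σ} G = ⊕_g D_g δ_g`:
`δ g a` represents the element `(e g * a) δ_g`, the `δ g` are `κ`-linear, the assignment
is multiplicative for the crossed-product multiplication
`(a δ_g)(b δ_h) = σ(g,h) a θ_g(1_{g⁻¹} b) δ_{gh}`, the sum `⊕_g D_g δ_g` is direct and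
spans `Λ`, and `1_Λ = 1_A δ_1`. -/
structure IsCrossedProduct (κ : Type) {G A : Type} [Field κ] [Group G]
    [Ring A] [Algebra κ A] (e : G → A) (θ : G → A → A) (σ : G → G → κ)
    (Λ : Type) [Ring Λ] [Algebra κ Λ] (δ : G → A → Λ) : Prop where
  lin : ∀ g : G, IsLinearMap κ (δ g)
  proj : ∀ (g : G) (a : A), δ g a = δ g (e g * a)
  unit : δ 1 1 = 1
  mul : ∀ (g h : G) (a b : A),
    δ g (e g * a) * δ h (e h * b) =
      σ g h • δ (g * h) (e g * a * θ g (e g⁻¹ * (e h * b)))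
  indep : ∀ (s : Finset G) (a : G → A), (∀ g : G, e g * a g = a g) →
    (∑ g ∈ s, δ g (a g)) = 0 → ∀ g ∈ s, a g = 0
  span : ∀ x : Λ, ∃ (s : Finset G) (a : G → A),
    (∀ g : G, e g * a g = a g) ∧ x = ∑ g ∈ s, δ g (a g)

/-- Let `θ` be a unital partial action of `G` on `A` with `κ`-based
partial 2-cocycle whose corresponding `κ`-valued twist is `σ`.  Then in the crossed
product `A ∗_{θ,ς} G` the map `Γ_σ : g ↦ 1_g δ_g` is a partial projective representation
of `G` with factor set `σ`. -/
theorem crossedProduct_canonical_partial_projective_rep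
    {κ G A : Type} [Field κ] [Group G] [Ring A] [Algebra κ A]
    (e : G → A) (θ : G → A → A) (σ : G → G → κ)
    (hθ : IsUnitalPartialAction κ e θ) (hσ : IsKValuedTwist κ e σ)
    (Λ : Type) [Ring Λ] [Algebra κ Λ] (δ : G → A → Λ)
    (hΛ : IsCrossedProduct κ e θ σ Λ δ)
    (Γ : G → Λ) (hΓ : ∀ g : G, Γ g = δ g (e g)) :
    (∀ g h : G, σ g h = 0 → Γ g⁻¹ * Γ (g * h) = 0 ∧ Γ (g * h) * Γ h⁻¹ = 0) ∧
    (∀ g h : G, Γ g⁻¹ * Γ g * Γ h = σ g h • (Γ g⁻¹ * Γ (g * h))) ∧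
    (∀ g h : G, Γ g * Γ h * Γ h⁻¹ = σ g h • (Γ (g * h) * Γ h⁻¹)) ∧
    (Γ 1 = 1) ∧
    (∀ g h : G, Γ g * Γ h = 0 → σ g h = 0) := by
  have comm : ∀ k l : G, e k * e l = e l * e k := fun k l => hθ.central k (e l)
  have dzero : ∀ g : G, δ g (0 : A) = 0 :=
    fun g => (IsLinearMap.mk' (δ g) (hΛ.lin g)).map_zero
  have tzero : ∀ g : G, θ g (0 : A) = 0 :=
    fun g => (IsLinearMap.mk' (θ g) (hθ.lin g)).map_zero
  have idem2 : ∀ k l : G, (e k * e l) * (e k * e l) = e k * e l := by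
    intro k l
    rw [mul_assoc, ← mul_assoc (e l), comm l k, mul_assoc, hθ.idem, ← mul_assoc, hθ.idem]
  -- key product formula
  have key : ∀ g h : G, Γ g * Γ h = σ g h • δ (g * h) (e g * e (g * h)) := by
    intro g h
    rw [hΓ, hΓ, hΛ.proj g, hΛ.proj h, hΛ.mul, hθ.idem, hθ.idem, hθ.unit_map,
      ← mul_assoc, hθ.idem]
  -- generic second step
  have key2 : ∀ (k h : G) (x : A),
      δ k (e k * x) * Γ h = σ k h • δ (k * h) (e k * x * (e k * e (k * h))) := by
    intro k h x
    rw [hΓ, hΛ.proj h, hΛ.mul, hθ.idem, hθ.unit_map]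
  -- transfer of vanishing
  have etr : ∀ g h : G, e g * e (g * h) = 0 → e g⁻¹ * e h = 0 := by
    intro g h h0
    have hu := hθ.unit_map g⁻¹ (g * h)
    rw [inv_inv, inv_mul_cancel_left, h0, tzero] at hu
    exact hu.symm
  -- injectivity of δ on components
  have dinj : ∀ (k : G) (x : A), δ k x = 0 → e k * x = 0 := by
    intro k x h0
    have := hΛ.indep {k} (fun t => e t * x)
      (fun t => by rw [← mul_assoc, hθ.idem])
      (by rwa [Finset.sum_singleton, ← hΛ.proj]) k (Finset.mem_singleton_self k)
    exact this
  refine ⟨?_, ?_, ?_, ?_, ?_⟩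
  · -- part 1
    intro g h h0
    have hz : e g * e (g * h) = 0 := (hσ.zero_iff g h).mp h0
    constructor
    · have := key g⁻¹ (g * h)
      rw [inv_mul_cancel_left, etr g h hz, dzero, smul_zero] at this
      exact this
    · have := key (g * h) h⁻¹
      rw [mul_inv_cancel_right, comm, hz, dzero, smul_zero] at this
      exact this
  · -- part 2
    intro g h
    have l1 : Γ g⁻¹ * Γ g * Γ h = (σ g⁻¹ g * σ 1 h) • δ h (e g⁻¹ * e h) := by
      rw [key g⁻¹ g, inv_mul_cancel, hθ.unit_one, mul_one, smul_mul_assoc]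
      have : δ 1 (e g⁻¹) * Γ h = σ 1 h • δ (1 * h) (e 1 * e g⁻¹ * (e 1 * e (1 * h))) := by
        rw [← key2 1 h (e g⁻¹), hθ.unit_one, one_mul]
      rw [this, hθ.unit_one, one_mul, one_mul, one_mul, smul_smul]
    have r1 : σ g h • (Γ g⁻¹ * Γ (g * h)) = (σ g h * σ g⁻¹ (g * h)) • δ h (e g⁻¹ * e h) := by
      rw [key g⁻¹ (g * h), inv_mul_cancel_left, smul_smul]
    rw [l1, r1]
    by_cases hz : e g⁻¹ * e h = 0
    · rw [hz, dzero, smul_zero, smul_zero]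
    · have hc := hσ.cocycle g⁻¹ g h (by simpa [hθ.unit_one] using hz)
      simp only [inv_mul_cancel, one_mul] at hc
      rw [hc, mul_comm]
  · -- part 3
    intro g h
    rw [key g h, smul_mul_assoc, comm, key2 (g * h) h⁻¹ (e g), mul_inv_cancel_right,
      idem2, key (g * h) h⁻¹, mul_inv_cancel_right]
  · rw [hΓ, hθ.unit_one, hΛ.unit]
  · -- part 5
    intro g h h0
    rw [key g h] at h0
    by_cases hz : σ g h = 0
    · exact hz
    · have hd : δ (g * h) (e g * e (g * h)) = 0 := by
        have := congrArg (fun x => (σ g h)⁻¹ • x) h0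
        simpa [smul_smul, inv_mul_cancel₀ hz] using this
      have h2 := dinj (g * h) (e g * e (g * h)) hd
      have h3 : e g * e (g * h) = e (g * h) * (e g * e (g * h)) := by
        rw [← mul_assoc, comm (g * h) g, mul_assoc, hθ.idem]
      exact (hσ.zero_iff g h).mpr (by rw [h3, h2])
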